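/- Let ε > 0 and let f_ε(r) = arctan(r/ε²) + (arctan ε)·r/ε for r ∈ [0, ε]. Then lim_{ε→0⁺} ∫_{r=0}^{ε} r·f_ε'(r)² dr = 1/2. -/

import Mathlib

open MeasureTheory Filter Topology Real

/-- The derivative of the zenith-angle function `f_ε(r) = arctan(r/ε²) + (arctan ε)·r/ε`,
namely `f_ε'(r) = ε²/(ε⁴ + r²) + (arctan ε)/ε`. -/
noncomputable def fder (ε r : ℝ) : ℝ := ε ^ 2 / (ε ^ 4 + r ^ 2) + Real.arctan ε / ε

/-- `lim_{ε→0⁺} ∫_{r=0}^{ε} r·f_ε'(r)² dr = 1/2`. -/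
theorem conti_de_lellis_energy_stereo :
    Tendsto (fun ε : ℝ => ∫ r in Set.Ioo (0 : ℝ) ε, r * fder ε r ^ 2)
      (𝓝[>] 0) (𝓝 (1 / 2)) := by
  set c : ℝ → ℝ := fun ε => Real.arctan ε / ε with hc
  have key : ∀ ε : ℝ, 0 < ε →
      (∫ r in Set.Ioo (0 : ℝ) ε, r * fder ε r ^ 2) =
        1/2 - ε^2/(2*(ε^2+1)) + c ε * ε^2 * (Real.log (1+ε^2) - 2*Real.log ε)
          + (c ε)^2 * ε^2/2 := by
    intro ε hε
    have hne : ∀ r : ℝ, ε^4 + r^2 ≠ 0 := by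
      intro r; positivity
    set F : ℝ → ℝ := fun r => -ε^4/2 * (ε^4+r^2)⁻¹ + c ε * ε^2 * Real.log (ε^4+r^2)
      + (c ε)^2 * r^2/2 with hF
    have hderiv : ∀ r ∈ Set.uIcc (0:ℝ) ε, HasDerivAt F (r * fder ε r ^ 2) r := by
      intro r _
      have h1 : HasDerivAt (fun r : ℝ => ε^4 + r^2) (2*r) r := by
        simpa using (hasDerivAt_pow 2 r).const_add (ε^4)
      have ht1 : HasDerivAt (fun r : ℝ => -ε^4/2 * (ε^4+r^2)⁻¹)
          ((-ε^4/2) * (-(2*r) / (ε^4+r^2)^2)) r :=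
        (h1.inv (hne r)).const_mul (-ε^4/2)
      have ht2 : HasDerivAt (fun r : ℝ => c ε * ε^2 * Real.log (ε^4+r^2))
          (c ε * ε^2 * (2*r / (ε^4+r^2))) r := (h1.log (hne r)).const_mul _
      have ht3 : HasDerivAt (fun r : ℝ => (c ε)^2 * r^2/2) ((c ε)^2 * r) r := by
        have := ((hasDerivAt_pow 2 r).const_mul ((c ε)^2)).div_const 2
        refine this.congr_deriv ?_; push_cast; ring
      have := (ht1.add ht2).add ht3
      refine this.congr_deriv ?_
      have hcε : fder ε r = ε^2/(ε^4+r^2) + c ε := rfl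
      rw [hcε]
      generalize c ε = a
      field_simp [hne r]
      ring
    have hcont : IntervalIntegrable (fun r => r * fder ε r ^ 2) volume 0 ε := by
      apply Continuous.intervalIntegrable
      unfold fder
      fun_prop (disch := intro r; positivity)
    have heq := intervalIntegral.integral_eq_sub_of_hasDerivAt hderiv hcont
    rw [MeasureTheory.integral_Ioc_eq_integral_Ioo.symm,
      ← intervalIntegral.integral_of_le hε.le, heq]
    have hε2 : (0:ℝ) < ε^2 := by positivity
    have hεne : ε ≠ 0 := hε.ne'
    have hF0 : F 0 = -(1/2) + c ε * ε^2 * (4 * Real.log ε) := by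
      simp only [hF]
      rw [show ε^4 + (0:ℝ)^2 = ε^4 by ring, Real.log_pow]
      push_cast
      field_simp [hεne]
      ring
    have hFε : F ε = -ε^2/(2*(ε^2+1)) + c ε * ε^2 * (2*Real.log ε + Real.log (ε^2+1))
        + (c ε)^2 * ε^2/2 := by
      simp only [hF]
      rw [show ε^4 + ε^2 = ε^2 * (ε^2+1) by ring,
        Real.log_mul (by positivity) (by positivity), Real.log_pow]
      push_cast
      have h1 : (ε^2*(ε^2+1)) ≠ 0 := by positivity
      field_simp [hεne, h1]
    rw [hF0, hFε, show (1:ℝ)+ε^2 = ε^2+1 by ring]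
    ring
  have hG : Tendsto (fun ε : ℝ =>
      1/2 - ε^2/(2*(ε^2+1)) + c ε * ε^2 * (Real.log (1+ε^2) - 2*Real.log ε)
        + (c ε)^2 * ε^2/2) (𝓝[>] 0) (𝓝 (1/2)) := by
    have hcl : Tendsto c (𝓝[>] 0) (𝓝 1) := by
      have h := Real.hasDerivAt_arctan 0
      have h2 := h.tendsto_slope_zero_right
      simp only [Real.arctan_zero] at h2
      have h3 : Tendsto c (𝓝[>] 0) (𝓝 (1 / (1 + 0^2))) := by
        apply h2.congr
        intro x
        simp [hc, smul_eq_mul, div_eq_inv_mul]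
      simpa using h3
    have h2 : Tendsto (fun ε : ℝ => ε^2) (𝓝[>] 0) (𝓝 0) := by
      have : Tendsto (fun ε : ℝ => ε^2) (𝓝 0) (𝓝 0) := by
        simpa using (continuous_pow 2).tendsto (0:ℝ)
      exact this.mono_left nhdsWithin_le_nhds
    have hterm1 : Tendsto (fun ε : ℝ => ε^2/(2*(ε^2+1))) (𝓝[>] 0) (𝓝 0) := by
      have : Tendsto (fun ε : ℝ => ε^2/(2*(ε^2+1))) (𝓝 0) (𝓝 (0/(2*(0+1)))) := by
        apply Tendsto.div
        · simpa using (continuous_pow 2).tendsto (0:ℝ)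
        · apply Tendsto.const_mul
          apply Tendsto.add_const
          simpa using (continuous_pow 2).tendsto (0:ℝ)
        · norm_num
      simpa using this.mono_left nhdsWithin_le_nhds
    have hloglim : Tendsto (fun ε : ℝ => ε^2 * Real.log ε) (𝓝[>] 0) (𝓝 0) := by
      have h := tendsto_log_mul_rpow_nhdsGT_zero (r := 2) (by norm_num)
      apply Tendsto.congr' _ (by simpa using h)
      filter_upwards [self_mem_nhdsWithin] with x hx
      ring
    have hlog1 : Tendsto (fun ε : ℝ => ε^2 * Real.log (1+ε^2)) (𝓝[>] 0) (𝓝 0) := by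
      have : Tendsto (fun ε : ℝ => ε^2 * Real.log (1+ε^2)) (𝓝 0)
          (𝓝 (0 * Real.log (1+0))) := by
        apply Tendsto.mul
        · simpa using (continuous_pow 2).tendsto (0:ℝ)
        · apply Real.continuousAt_log (by norm_num) |>.tendsto.comp
          apply Tendsto.const_add
          simpa using (continuous_pow 2).tendsto (0:ℝ)
      simpa using this.mono_left nhdsWithin_le_nhds
    have hmid : Tendsto (fun ε : ℝ => c ε * ε^2 * (Real.log (1+ε^2) - 2*Real.log ε))
        (𝓝[>] 0) (𝓝 0) := by
      have : Tendsto (fun ε : ℝ => c ε * (ε^2 * Real.log (1+ε^2) - 2*(ε^2 * Real.log ε)))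
          (𝓝[>] 0) (𝓝 (1 * (0 - 2*0))) :=
        hcl.mul (hlog1.sub (hloglim.const_mul 2))
      simpa using this.congr (fun x => by ring)
    have hlast : Tendsto (fun ε : ℝ => (c ε)^2 * ε^2/2) (𝓝[>] 0) (𝓝 (1^2*0/2)) :=
      (((hcl.pow 2).mul h2).div_const 2)
    have := ((tendsto_const_nhds (x := (1/2:ℝ)).sub hterm1).add hmid).add (by simpa using hlast)
    simpa using this
  refine Tendsto.congr' ?_ hG
  filter_upwards [self_mem_nhdsWithin] with ε hε
  exact (key ε hε).symm
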